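/- arXiv:2510.14555 — 5 statements merged into one kernel-verified Lean document; each statement's English description precedes it below -/
import Mathlib

section
/- The nominal value function is monotone with respect to coalition inclusion: for all coalitions R ⊆ S ⊆ N, one has v(R) ≤ v(S). -/
open Finset

/-- Feasible value set `F(S)` of a coalition `S`: all values
`∑ t, ∑ i ∈ S, u i t (h (i,t)) − Cost C` for feasible `(C, h)`. -/
def feasibleSet {N T : Type*} [Fintype T] (u : N → T → ℝ → ℝ) (Cost : ℝ → ℝ)
    (S : Finset N) : Set ℝ :=
  { x | ∃ (C : ℝ) (h : N × T → ℝ), 0 ≤ C ∧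
      (∀ i ∈ S, ∀ t : T, 0 ≤ h (i, t)) ∧
      (∀ t : T, (∑ i ∈ S, h (i, t)) ≤ C) ∧
      x = (∑ t : T, ∑ i ∈ S, u i t (h (i, t))) - Cost C }

/-- The nominal value function: `v S = sSup (F S)` if the infrastructure provider `i0`
belongs to `S`, and `0` otherwise. -/
noncomputable def nominalValue {N T : Type*} [Fintype T] [DecidableEq N]
    (i0 : N) (u : N → T → ℝ → ℝ) (Cost : ℝ → ℝ) (S : Finset N) : ℝ :=
  if i0 ∈ S then sSup (feasibleSet u Cost S) else 0

lemma zero_mem_feasibleSet {N T : Type*} [Fintype T] (u : N → T → ℝ → ℝ) (Cost : ℝ → ℝ)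
    (hu0 : ∀ i t, u i t 0 = 0) (hCost0 : Cost 0 = 0) (S : Finset N) :
    (0 : ℝ) ∈ feasibleSet u Cost S := by
  refine ⟨0, fun _ => 0, le_refl 0, fun _ _ _ => le_refl 0, fun t => by simp, ?_⟩
  simp [hu0, hCost0]

theorem stmt2' {N T : Type*} [Fintype N] [Fintype T] [Nonempty T] [DecidableEq N]
    (i0 : N) (u : N → T → ℝ → ℝ) (Cost : ℝ → ℝ)
    (hu0 : ∀ i t, u i t 0 = 0)
    (hupos : ∀ i t x, (0 : ℝ) ≤ x → 0 ≤ u i t x)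
    (hCost0 : Cost 0 = 0)
    (hbdd : ∀ S : Finset N, BddAbove (feasibleSet u Cost S)) :
    ∀ R S : Finset N, R ⊆ S →
      nominalValue i0 u Cost R ≤ nominalValue i0 u Cost S := by
  intro R S hRS
  unfold nominalValue
  have hzS : (0:ℝ) ∈ feasibleSet u Cost S := zero_mem_feasibleSet u Cost hu0 hCost0 S
  by_cases hR : i0 ∈ R
  · have hS : i0 ∈ S := hRS hR
    simp only [hR, hS, if_true]
    apply csSup_le ⟨0, zero_mem_feasibleSet u Cost hu0 hCost0 R⟩
    rintro x ⟨C, h, hC, hh, hsum, rfl⟩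
    apply le_csSup (hbdd S)
    refine ⟨C, fun p => if p.1 ∈ R then h p else 0, hC, ?_, ?_, ?_⟩
    · intro i hi t
      by_cases hiR : i ∈ R <;> simp [hiR, hh i, *]
    · intro t
      calc ∑ i ∈ S, (if (i, t).1 ∈ R then h (i,t) else 0)
          = ∑ i ∈ R, h (i, t) := by
            rw [Finset.sum_ite_mem, Finset.inter_eq_right.mpr hRS]
        _ ≤ C := hsum t
    · congr 1
      apply Finset.sum_congr rfl
      intro t _
      rw [show ∑ i ∈ R, u i t (h (i,t))
          = ∑ i ∈ R, u i t (if (i,t).1 ∈ R then h (i,t) else 0) from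
          Finset.sum_congr rfl (fun i hi => by simp [hi])]
      exact Finset.sum_subset hRS (fun i _ hiR => by simp [hiR, hu0])
  · simp only [hR, if_false]
    by_cases hS : i0 ∈ S
    · simp only [hS, if_true]
      exact le_csSup (hbdd S) hzS
    · simp [hS]

/-- The nominal value function is monotone with respect to coalition
inclusion: for all coalitions `R ⊆ S ⊆ N`, one has `v(R) ≤ v(S)`. -/
theorem stmt2 {N T : Type*} [Fintype N] [Fintype T] [Nonempty T] [DecidableEq N]
    (i0 : N) (u : N → T → ℝ → ℝ) (Cost : ℝ → ℝ)
    (hu0 : ∀ i t, u i t 0 = 0)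
    (hupos : ∀ i t x, (0 : ℝ) ≤ x → 0 ≤ u i t x)
    (hCost0 : Cost 0 = 0)
    (hbdd : ∀ S : Finset N, BddAbove (feasibleSet u Cost S)) :
    ∀ R S : Finset N, R ⊆ S →
      nominalValue i0 u Cost R ≤ nominalValue i0 u Cost S :=
  stmt2' i0 u Cost hu0 hupos hCost0 hbdd
end

section
/- Let N be a finite set with |N| ≥ 2, let v assign a real number to each subset of N, and let V = v(N) > 0. For σ > 0 define D(σ) as the maximum over all nonempty proper subsets S ⊊ N of the quantity |S| + (|N| − 2|S|)·(v(S) + σ)/V, and define δ(σ) = min( V/|N| , σ / D(σ) ). Assume that for every nonempty proper subset S ⊊ N one has |S|·V + (|N| − 2|S|)·v(S) ≥ 0, and that 0 < σ̂ ≤ σ with D(σ) > 0. Then D(σ̂) > 0 and δ(σ̂) ≤ δ(σ); in particular the threshold computed from the smaller stability value σ̂ is tighter than (at most equal to) the one computed from the larger stability value σ. -/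
open Finset

/-- Let `N` be finite with `|N| ≥ 2`, `v` a value function on subsets of
`N` with `V = v(univ) > 0`. For `σ > 0` let
`D σ = max_{∅ ≠ S ⊊ N} (|S| + (|N| − 2|S|)·(v S + σ)/V)` and
`δ σ = min (V/|N|) (σ / D σ)`. If `|S|·V + (|N| − 2|S|)·v S ≥ 0` for every nonempty
proper `S`, and `0 < σ̂ ≤ σ` with `D σ > 0`, then `D σ̂ > 0` and `δ σ̂ ≤ δ σ`. -/
theorem stmt5 {N : Type*} [Fintype N] [DecidableEq N]
    (hcard : 2 ≤ Fintype.card N)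
    (v : Finset N → ℝ) (hV : 0 < v Finset.univ)
    (D : ℝ → ℝ)
    (hD : ∀ s : ℝ, D s = sSup {x : ℝ | ∃ S : Finset N, S.Nonempty ∧ S ≠ Finset.univ ∧
        x = (S.card : ℝ) +
          ((Fintype.card N : ℝ) - 2 * S.card) * (v S + s) / v Finset.univ})
    (hnn : ∀ S : Finset N, S.Nonempty → S ≠ Finset.univ →
        0 ≤ (S.card : ℝ) * v Finset.univ +
          ((Fintype.card N : ℝ) - 2 * S.card) * v S)
    (σhat σ : ℝ) (h0 : 0 < σhat) (hle : σhat ≤ σ) (hDσ : 0 < D σ) :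
    0 < D σhat ∧
      min (v Finset.univ / (Fintype.card N : ℝ)) (σhat / D σhat) ≤
        min (v Finset.univ / (Fintype.card N : ℝ)) (σ / D σ) := by
  have hσ : 0 < σ := lt_of_lt_of_le h0 hle
  set V := v Finset.univ with hVdef
  set f : ℝ → Finset N → ℝ := fun s S =>
    (S.card : ℝ) + ((Fintype.card N : ℝ) - 2 * S.card) * (v S + s) / V with hf
  have hset : ∀ s : ℝ, {x : ℝ | ∃ S : Finset N, S.Nonempty ∧ S ≠ Finset.univ ∧ x = f s S}
      = f s '' {S | S.Nonempty ∧ S ≠ Finset.univ} := by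
    intro s; ext x
    simp only [Set.mem_setOf_eq, Set.mem_image]
    constructor
    · rintro ⟨S, h1, h2, rfl⟩; exact ⟨S, ⟨h1, h2⟩, rfl⟩
    · rintro ⟨S, ⟨h1, h2⟩, rfl⟩; exact ⟨S, h1, h2, rfl⟩
  have hfin : ∀ s : ℝ,
      ({x : ℝ | ∃ S : Finset N, S.Nonempty ∧ S ≠ Finset.univ ∧ x = f s S}).Finite := by
    intro s; rw [hset]; exact (Set.toFinite _).image _
  have hne : ∃ S : Finset N, S.Nonempty ∧ S ≠ Finset.univ := by
    obtain ⟨a⟩ := (Fintype.card_pos_iff (α := N)).1 (by omega)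
    refine ⟨{a}, singleton_nonempty a, fun h => ?_⟩
    have := Finset.card_univ (α := N)
    rw [← h, card_singleton] at this
    omega
  have hsetne : ∀ s : ℝ,
      ({x : ℝ | ∃ S : Finset N, S.Nonempty ∧ S ≠ Finset.univ ∧ x = f s S}).Nonempty := by
    intro s; obtain ⟨S, h1, h2⟩ := hne; exact ⟨f s S, S, h1, h2, rfl⟩
  have hle_D : ∀ (s : ℝ) (S : Finset N), S.Nonempty → S ≠ Finset.univ → f s S ≤ D s := by
    intro s S h1 h2
    rw [hD s]
    exact le_csSup (hfin s).bddAbove ⟨S, h1, h2, rfl⟩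
  have hpt : ∀ S : Finset N, S.Nonempty → S ≠ Finset.univ → f σ S * σhat ≤ f σhat S * σ := by
    intro S h1 h2
    have h3 := hnn S h1 h2
    have hkey : f σ S * σhat - f σhat S * σ = (σhat - σ) *
        (((S.card : ℝ) * V + ((Fintype.card N : ℝ) - 2 * S.card) * v S) / V) := by
      simp only [hf]
      field_simp
      ring
    have h4 : (σhat - σ) *
        (((S.card : ℝ) * V + ((Fintype.card N : ℝ) - 2 * S.card) * v S) / V) ≤ 0 :=
      mul_nonpos_of_nonpos_of_nonneg (by linarith) (div_nonneg h3 hV.le)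
    rw [← sub_nonpos, hkey]
    exact h4
  have hDle : D σ * σhat ≤ D σhat * σ := by
    rw [hD σ]
    rw [show D σhat * σ = (D σhat * σ / σhat) * σhat by field_simp]
    apply mul_le_mul_of_nonneg_right _ h0.le
    apply csSup_le (hsetne σ)
    rintro x ⟨S, h1, h2, rfl⟩
    rw [le_div_iff₀ h0]
    calc f σ S * σhat ≤ f σhat S * σ := hpt S h1 h2
      _ ≤ D σhat * σ := mul_le_mul_of_nonneg_right (hle_D σhat S h1 h2) hσ.le
  have hDσhat : 0 < D σhat := by nlinarith
  refine ⟨hDσhat, min_le_min le_rfl ?_⟩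
  rw [div_le_div_iff₀ hDσhat hDσ]
  nlinarith
end

section
/- Let P be a nonempty finite set with n = |P|, let ξ > 0, let w : P → ℝ with w_i > 0 for every i ∈ P, and let C ∈ ℝ. Define G = (∏_{j ∈ P} w_j)^{1/n} and h*_i = C/n + (1/ξ)·ln(w_i / G) for each i ∈ P. Then ∑_{i ∈ P} h*_i = C, and for every h : P → ℝ with ∑_{i ∈ P} h_i ≤ C one has ∑_{i ∈ P} w_i·(1 − exp(−ξ·h_i)) ≤ ∑_{i ∈ P} w_i·(1 − exp(−ξ·h*_i)); that is, the allocation h* maximizes the total utility subject to the capacity constraint ∑_i h_i ≤ C. -/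
open Finset

/-- Let `P` be a nonempty finite set with `n = |P|`, `ξ > 0`,
`w : P → ℝ` with `w i > 0`, and `C ∈ ℝ`. With `G = (∏ j, w j)^(1/n)` and
`h* i = C/n + (1/ξ)·ln(w i / G)`, one has `∑ i, h* i = C`, and `h*` maximizes
`∑ i, w i·(1 − exp(−ξ·h i))` over all `h` with `∑ i, h i ≤ C`. -/
theorem stmt12 {P : Type*} [Fintype P] [Nonempty P]
    (ξ : ℝ) (hξ : 0 < ξ) (w : P → ℝ) (hw : ∀ i, 0 < w i) (C : ℝ)
    (hstar : P → ℝ)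
    (hdef : ∀ i : P, hstar i = C / (Fintype.card P : ℝ) +
      (1 / ξ) * Real.log (w i / (∏ j : P, w j) ^ ((1 : ℝ) / (Fintype.card P : ℝ)))) :
    (∑ i : P, hstar i) = C ∧
    ∀ h : P → ℝ, (∑ i : P, h i) ≤ C →
      (∑ i : P, w i * (1 - Real.exp (-ξ * h i))) ≤
        ∑ i : P, w i * (1 - Real.exp (-ξ * hstar i)) := by
  set n : ℕ := Fintype.card P with hn
  have hn0 : 0 < n := Fintype.card_pos
  have hnR : (0:ℝ) < (n:ℝ) := by exact_mod_cast hn0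
  have hProd : (0:ℝ) < ∏ j : P, w j := Finset.prod_pos (fun i _ => hw i)
  set G : ℝ := (∏ j : P, w j) ^ ((1 : ℝ) / (n : ℝ)) with hG
  have hGpos : 0 < G := Real.rpow_pos_of_pos hProd _
  have hGn : G ^ (n:ℕ) = ∏ j : P, w j := by
    rw [hG, ← Real.rpow_natCast (_ ^ _), ← Real.rpow_mul hProd.le]
    rw [one_div, inv_mul_cancel₀ hnR.ne', Real.rpow_one]
  -- sum of logs is zero
  have hlogsum : ∑ i : P, Real.log (w i / G) = 0 := by
    rw [← Real.log_prod (fun i _ => (div_pos (hw i) hGpos).ne')]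
    rw [Finset.prod_div_distrib, Finset.prod_const, Finset.card_univ, ← hn, hGn,
      div_self hProd.ne']
    exact Real.log_one
  have hsum : (∑ i : P, hstar i) = C := by
    have : (∑ i : P, hstar i) = ∑ i : P, (C / (n:ℝ) + (1/ξ) * Real.log (w i / G)) := by
      apply Finset.sum_congr rfl; intro i _; rw [hdef i]
    rw [this, Finset.sum_add_distrib, ← Finset.mul_sum, hlogsum, mul_zero, add_zero,
      Finset.sum_const, Finset.card_univ, ← hn, nsmul_eq_mul, mul_div_cancel₀ _ hnR.ne']
  refine ⟨hsum, ?_⟩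
  intro h hhC
  -- key: w i * exp(-ξ * hstar i) = K constant
  set K : ℝ := G * Real.exp (-ξ * (C / (n:ℝ))) with hK
  have hKpos : 0 < K := by positivity
  have hkey : ∀ i : P, w i * Real.exp (-ξ * hstar i) = K := by
    intro i
    have h1 : -ξ * hstar i = -ξ * (C / (n:ℝ)) + (- Real.log (w i / G)) := by
      rw [hdef i]; field_simp; ring
    rw [h1, Real.exp_add, Real.exp_neg, Real.exp_log (div_pos (hw i) hGpos), hK, inv_div]
    field_simp [(hw i).ne']
  -- reduce to ∑ w i exp(-ξ hstar i) ≤ ∑ w i exp(-ξ h i)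
  have hred : ∑ i : P, w i * Real.exp (-ξ * hstar i) ≤
      ∑ i : P, w i * Real.exp (-ξ * h i) := by
    have hlhs : ∑ i : P, w i * Real.exp (-ξ * hstar i) = (n:ℝ) * K := by
      rw [Finset.sum_congr rfl (fun i _ => hkey i), Finset.sum_const,
        Finset.card_univ, ← hn, nsmul_eq_mul]
    rw [hlhs]
    have hpt : ∀ i : P, K * (1 + (-ξ) * (h i - hstar i)) ≤ w i * Real.exp (-ξ * h i) := by
      intro i
      have : w i * Real.exp (-ξ * h i) = K * Real.exp (-ξ * (h i - hstar i)) := by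
        rw [← hkey i, mul_comm (w i), mul_assoc, ← Real.exp_add]
        ring_nf
      rw [this]
      have he := Real.add_one_le_exp (-ξ * (h i - hstar i))
      exact mul_le_mul_of_nonneg_left (by linarith) hKpos.le
    calc (n:ℝ) * K ≤ ∑ i : P, K * (1 + (-ξ) * (h i - hstar i)) := by
          rw [Finset.sum_congr rfl (fun i _ => by ring_nf : ∀ i ∈ Finset.univ,
            K * (1 + (-ξ) * (h i - hstar i)) = K - K * ξ * (h i - hstar i))]
          rw [Finset.sum_sub_distrib, Finset.sum_const, Finset.card_univ, ← hn,
            nsmul_eq_mul]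
          have : ∑ i : P, K * ξ * (h i - hstar i) ≤ 0 := by
            rw [← Finset.mul_sum, Finset.sum_sub_distrib, hsum]
            have : (∑ i : P, h i) - C ≤ 0 := by linarith
            nlinarith [mul_pos hKpos hξ]
          linarith
      _ ≤ ∑ i : P, w i * Real.exp (-ξ * h i) :=
          Finset.sum_le_sum (fun i _ => hpt i)
  have e1 : ∑ i : P, w i * (1 - Real.exp (-ξ * h i)) =
      (∑ i : P, w i) - ∑ i : P, w i * Real.exp (-ξ * h i) := by
    rw [← Finset.sum_sub_distrib]; apply Finset.sum_congr rfl; intro i _; ring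
  have e2 : ∑ i : P, w i * (1 - Real.exp (-ξ * hstar i)) =
      (∑ i : P, w i) - ∑ i : P, w i * Real.exp (-ξ * hstar i) := by
    rw [← Finset.sum_sub_distrib]; apply Finset.sum_congr rfl; intro i _; ring
  rw [e1, e2]
  linarith
end

section
/- Let P (service providers) and T (time slots) be nonempty finite sets, n = |P|, ξ > 0, B > 0, and w : P × T → ℝ with w_{i,t} > 0 for all i, t. Define C* = (n/ξ)·ln( ( ∑_{t ∈ T} (∏_{j ∈ P} ξ·w_{j,t})^{1/n} ) / B ) and h*_{i,t} = C*/n + (1/ξ)·ln( w_{i,t} / (∏_{j ∈ P} w_{j,t})^{1/n} ). Assume C* ≥ 0 and h*_{i,t} ≥ 0 for all i ∈ P, t ∈ T. Then (C*, h*) is feasible and optimal: for every C ≥ 0 and every h : P × T → ℝ with h_{i,t} ≥ 0 for all i, t and ∑_{i ∈ P} h_{i,t} ≤ C for every t, one has ∑_{t ∈ T} ∑_{i ∈ P} w_{i,t}·(1 − exp(−ξ·h_{i,t})) − B·C ≤ ∑_{t ∈ T} ∑_{i ∈ P} w_{i,t}·(1 − exp(−ξ·h*_{i,t})) − B·C*.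 -/
open Finset

/-- Let `P`, `T` be nonempty finite sets, `n = |P|`, `ξ > 0`, `B > 0`,
and `w i t > 0` for all `i, t`. With
`C* = (n/ξ)·ln((∑ t, (∏ j, ξ·w j t)^(1/n)) / B)` and
`h* i t = C*/n + (1/ξ)·ln(w i t / (∏ j, w j t)^(1/n))`, assuming `C* ≥ 0` and
`h* i t ≥ 0` for all `i, t`, the pair `(C*, h*)` is feasible and optimal for the
problem of maximizing `∑ t, ∑ i, w i t·(1 − exp(−ξ·h i t)) − B·C` over all `C ≥ 0`
and `h ≥ 0` with `∑ i, h i t ≤ C` for every `t`. -/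
theorem stmt13 {P T : Type*} [Fintype P] [Fintype T] [Nonempty P] [Nonempty T]
    (ξ B : ℝ) (hξ : 0 < ξ) (hB : 0 < B)
    (w : P → T → ℝ) (hw : ∀ i t, 0 < w i t)
    (n : ℝ) (hn : n = (Fintype.card P : ℝ))
    (Cstar : ℝ)
    (hCdef : Cstar = (n / ξ) *
      Real.log ((∑ t : T, (∏ j : P, ξ * w j t) ^ (1 / n)) / B))
    (hstar : P → T → ℝ)
    (hhdef : ∀ (i : P) (t : T), hstar i t = Cstar / n +
      (1 / ξ) * Real.log (w i t / (∏ j : P, w j t) ^ (1 / n)))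
    (hCnonneg : 0 ≤ Cstar) (hhnonneg : ∀ (i : P) (t : T), 0 ≤ hstar i t) :
    (∀ t : T, (∑ i : P, hstar i t) ≤ Cstar) ∧
    ∀ (C : ℝ) (h : P → T → ℝ), 0 ≤ C → (∀ (i : P) (t : T), 0 ≤ h i t) →
      (∀ t : T, (∑ i : P, h i t) ≤ C) →
      (∑ t : T, ∑ i : P, w i t * (1 - Real.exp (-ξ * h i t))) - B * C ≤
        (∑ t : T, ∑ i : P, w i t * (1 - Real.exp (-ξ * hstar i t))) - B * Cstar := by
  have hcard : 0 < Fintype.card P := Fintype.card_pos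
  have hn0 : (0:ℝ) < n := by rw [hn]; exact_mod_cast hcard
  -- product of weights
  set Pw : T → ℝ := fun t => ∏ j : P, w j t with hPw
  have hPwpos : ∀ t, 0 < Pw t := fun t => Finset.prod_pos (fun j _ => hw j t)
  have hPwr : ∀ t, 0 < (Pw t) ^ (1 / n) := fun t => Real.rpow_pos_of_pos (hPwpos t) _
  -- the per-slot quantity appearing in C*
  have hG : ∀ t : T, (∏ j : P, ξ * w j t) ^ (1 / n) = ξ * (Pw t) ^ (1 / n) := by
    intro t
    rw [Finset.prod_mul_distrib, Finset.prod_const]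
    rw [Real.mul_rpow (by positivity) (le_of_lt (hPwpos t))]
    congr 1
    rw [← Real.rpow_natCast ξ, ← Real.rpow_mul hξ.le, Finset.card_univ, ← hn]
    rw [mul_one_div, div_self hn0.ne', Real.rpow_one]
  set S : ℝ := ∑ t : T, (∏ j : P, ξ * w j t) ^ (1 / n) with hS
  have hSpos : 0 < S := by
    rw [hS]
    apply Finset.sum_pos (fun t _ => ?_) Finset.univ_nonempty
    rw [hG t]; exact mul_pos hξ (hPwr t)
  -- per-slot logs sum to zero
  have hlog0 : ∀ t : T, ∑ i : P, Real.log (w i t / (Pw t) ^ (1 / n)) = 0 := by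
    intro t
    have : ∀ i : P, Real.log (w i t / (Pw t) ^ (1 / n)) =
        Real.log (w i t) - (1 / n) * Real.log (Pw t) := by
      intro i
      rw [Real.log_div (hw i t).ne' (hPwr t).ne', Real.log_rpow (hPwpos t)]
    have hlp : Real.log (Pw t) = ∑ i : P, Real.log (w i t) :=
      Real.log_prod (fun i _ => (hw i t).ne')
    simp only [this, Finset.sum_sub_distrib, Finset.sum_const, nsmul_eq_mul,
      Finset.card_univ, ← hn, hlp]
    field_simp
    ring
  -- feasibility (with equality)
  have hfeas : ∀ t : T, (∑ i : P, hstar i t) = Cstar := by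
    intro t
    simp only [hhdef]
    rw [Finset.sum_add_distrib, ← Finset.mul_sum, hlog0 t]
    simp only [Finset.sum_const, nsmul_eq_mul, mul_zero, add_zero, Finset.card_univ, ← hn]
    field_simp
  refine ⟨fun t => le_of_eq (hfeas t), ?_⟩
  intro C h hC hh hhC
  -- key: w i t * exp(-ξ * hstar i t) = (B/S) * (Pw t)^(1/n)
  have hexpC : Real.exp (-(ξ * Cstar / n)) = B / S := by
    have h1 : ξ * Cstar / n = Real.log (S / B) := by
      rw [hCdef]; field_simp
    rw [h1, Real.exp_neg, Real.exp_log (div_pos hSpos hB), inv_div]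
  have hek : ∀ i t, w i t * Real.exp (-ξ * hstar i t) = (B / S) * (Pw t) ^ (1 / n) := by
    intro i t
    have : -ξ * hstar i t = -(ξ * Cstar / n) + -Real.log (w i t / (Pw t) ^ (1 / n)) := by
      rw [hhdef]; field_simp; ring
    rw [this, Real.exp_add, hexpC, Real.exp_neg,
      Real.exp_log (div_pos (hw i t) (hPwr t))]
    have hSne : S ≠ 0 := hSpos.ne'
    have hwne : w i t ≠ 0 := (hw i t).ne'
    have hPne : (Pw t) ^ (1 / n) ≠ 0 := (hPwr t).ne'
    field_simp
  set lam : T → ℝ := fun t => (B / S) * (ξ * (Pw t) ^ (1 / n)) with hlam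
  have hlampos : ∀ t, 0 < lam t := fun t =>
    mul_pos (div_pos hB hSpos) (mul_pos hξ (hPwr t))
  have hlamsum : ∑ t : T, lam t = B := by
    simp only [hlam]
    rw [← Finset.mul_sum]
    have : ∑ t : T, ξ * (Pw t) ^ (1 / n) = S := by
      rw [hS]; exact Finset.sum_congr rfl (fun t _ => (hG t).symm)
    rw [this, div_mul_cancel₀ B hSpos.ne']
  -- pointwise tangent bound
  have hpt : ∀ i t, w i t * (1 - Real.exp (-ξ * h i t)) -
      w i t * (1 - Real.exp (-ξ * hstar i t)) ≤ lam t * (h i t - hstar i t) := by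
    intro i t
    have htan : Real.exp (-ξ * hstar i t) * (ξ * (hstar i t - h i t) + 1) ≤
        Real.exp (-ξ * h i t) := by
      have := Real.add_one_le_exp (ξ * (hstar i t - h i t))
      calc Real.exp (-ξ * hstar i t) * (ξ * (hstar i t - h i t) + 1)
          ≤ Real.exp (-ξ * hstar i t) * Real.exp (ξ * (hstar i t - h i t)) :=
            mul_le_mul_of_nonneg_left this (Real.exp_nonneg _)
        _ = Real.exp (-ξ * h i t) := by rw [← Real.exp_add]; ring_nf
    have hwpos := hw i t
    have h2 : w i t * (Real.exp (-ξ * hstar i t) - Real.exp (-ξ * h i t)) ≤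
        w i t * (Real.exp (-ξ * hstar i t) * (ξ * (h i t - hstar i t))) := by
      apply mul_le_mul_of_nonneg_left _ hwpos.le
      nlinarith [htan]
    calc w i t * (1 - Real.exp (-ξ * h i t)) - w i t * (1 - Real.exp (-ξ * hstar i t))
        = w i t * (Real.exp (-ξ * hstar i t) - Real.exp (-ξ * h i t)) := by ring
      _ ≤ w i t * (Real.exp (-ξ * hstar i t) * (ξ * (h i t - hstar i t))) := h2
      _ = (w i t * Real.exp (-ξ * hstar i t)) * ξ * (h i t - hstar i t) := by ring
      _ = lam t * (h i t - hstar i t) := by rw [hek i t, hlam]; ring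
  -- combine
  have hmain : (∑ t : T, ∑ i : P, w i t * (1 - Real.exp (-ξ * h i t))) -
      (∑ t : T, ∑ i : P, w i t * (1 - Real.exp (-ξ * hstar i t))) ≤ B * C - B * Cstar := by
    rw [← Finset.sum_sub_distrib]
    have : ∀ t : T, (∑ i : P, w i t * (1 - Real.exp (-ξ * h i t))) -
        (∑ i : P, w i t * (1 - Real.exp (-ξ * hstar i t))) ≤ lam t * (C - Cstar) := by
      intro t
      rw [← Finset.sum_sub_distrib]
      calc ∑ i : P, (w i t * (1 - Real.exp (-ξ * h i t)) -
              w i t * (1 - Real.exp (-ξ * hstar i t)))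
          ≤ ∑ i : P, lam t * (h i t - hstar i t) :=
            Finset.sum_le_sum (fun i _ => hpt i t)
        _ = lam t * ((∑ i : P, h i t) - Cstar) := by
            rw [← Finset.mul_sum, Finset.sum_sub_distrib, hfeas t]
        _ ≤ lam t * (C - Cstar) := by
            apply mul_le_mul_of_nonneg_left _ (hlampos t).le
            linarith [hhC t]
    calc ∑ t : T, ((∑ i : P, w i t * (1 - Real.exp (-ξ * h i t))) -
            (∑ i : P, w i t * (1 - Real.exp (-ξ * hstar i t))))
        ≤ ∑ t : T, lam t * (C - Cstar) := Finset.sum_le_sum (fun t _ => this t)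
      _ = B * C - B * Cstar := by rw [← Finset.sum_mul, hlamsum]; ring
  linarith
end

section
/- Let P be a nonempty finite set with n = |P|, T a nonempty finite set, ξ > 0, B > 0, β : P → ℝ with β_j > 0, and l : P × T → ℝ with l_{j,t} > 0. Define C*(β, l) = (n/ξ)·ln( ( ∑_{t′ ∈ T} (∏_{j ∈ P} ξ·β_j·l_{j,t′})^{1/n} ) / B ) and, for i ∈ P and t ∈ T, h*_{i,t}(β, l) = C*(β, l)/n + (1/ξ)·ln( β_i·l_{i,t} / (∏_{j ∈ P} β_j·l_{j,t})^{1/n} ). Then, with all other parameters fixed, the map sending β_i ∈ (0, ∞) to h*_{i,t}(β, l) is strictly increasing, and the map sending l_{i,t} ∈ (0, ∞) to h*_{i,t}(β, l) is strictly increasing. -/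
open Finset

/-- Optimal installed capacity from the closed-form KKT solution:
`C*(β, l) = (n/ξ)·ln((∑ t', (∏ j, ξ·β j·l j t')^(1/n)) / B)`. -/
noncomputable def Cstar {P T : Type*} [Fintype P] [Fintype T]
    (ξ B : ℝ) (β : P → ℝ) (l : P → T → ℝ) : ℝ :=
  ((Fintype.card P : ℝ) / ξ) *
    Real.log ((∑ t' : T, (∏ j : P, ξ * β j * l j t') ^
      ((1 : ℝ) / (Fintype.card P : ℝ))) / B)

/-- Optimal resource share of provider `i` at slot `t` from the closed-form KKT
solution: `h* i t = C*/n + (1/ξ)·ln(β i·l i t / (∏ j, β j·l j t)^(1/n))`. -/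
noncomputable def hstar {P T : Type*} [Fintype P] [Fintype T]
    (ξ B : ℝ) (β : P → ℝ) (l : P → T → ℝ) (i : P) (t : T) : ℝ :=
  Cstar ξ B β l / (Fintype.card P : ℝ) +
    (1 / ξ) * Real.log (β i * l i t / (∏ j : P, β j * l j t) ^
      ((1 : ℝ) / (Fintype.card P : ℝ)))

/-- With all other parameters fixed (and all parameters strictly
positive), the optimal share `h* i t` is strictly increasing in the benefit factor
`β i` on `(0, ∞)`, and strictly increasing in the expected load `l i t` on `(0, ∞)`. -/
theorem stmt14 {P T : Type*} [Fintype P] [Fintype T] [Nonempty P] [Nonempty T]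
    [DecidableEq P] [DecidableEq T]
    (ξ B : ℝ) (hξ : 0 < ξ) (hB : 0 < B)
    (β : P → ℝ) (hβ : ∀ j, 0 < β j)
    (l : P → T → ℝ) (hl : ∀ j t, 0 < l j t)
    (i : P) (t : T) :
    StrictMonoOn (fun b : ℝ => hstar ξ B (Function.update β i b) l i t)
      (Set.Ioi (0 : ℝ)) ∧
    StrictMonoOn (fun x : ℝ => hstar ξ B β
      (fun j t' => if j = i ∧ t' = t then x else l j t') i t)
      (Set.Ioi (0 : ℝ)) := by
  have hn0 : 0 < (Fintype.card P : ℝ) := by exact_mod_cast Fintype.card_pos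
  have hn1 : (1 : ℝ) ≤ (Fintype.card P : ℝ) := by exact_mod_cast Fintype.card_pos
  set n : ℝ := (Fintype.card P : ℝ) with hn
  constructor
  · -- strictly increasing in β i
    set Q : T → ℝ := fun t' => ∏ j ∈ univ.erase i, (ξ * β j * l j t') with hQ
    have hQpos : ∀ t', 0 < Q t' := fun t' =>
      Finset.prod_pos fun j _ => mul_pos (mul_pos hξ (hβ j)) (hl j t')
    set S : ℝ := ∑ t' : T, (ξ * l i t' * Q t') ^ ((1 : ℝ) / n) with hS
    have hSpos : 0 < S :=
      Finset.sum_pos (fun t' _ => Real.rpow_pos_of_pos (mul_pos (mul_pos hξ (hl i t')) (hQpos t')) _)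
        Finset.univ_nonempty
    set R : ℝ := l i t * ∏ j ∈ univ.erase i, (β j * l j t) with hR
    have hRpos : 0 < R := by
      have : (0:ℝ) < ∏ j ∈ univ.erase i, (β j * l j t) :=
        Finset.prod_pos fun j _ => mul_pos (hβ j) (hl j t)
      exact mul_pos (hl i t) this
    have key : ∀ b : ℝ, 0 < b →
        hstar ξ B (Function.update β i b) l i t
          = (1 / ξ) * Real.log b
            + ((1 / ξ) * (Real.log S - Real.log B)
               + (1 / ξ) * (Real.log (l i t) - (1 / n) * Real.log R)) := by
      intro b hb
      have hprod : ∀ t', (∏ j : P, ξ * Function.update β i b j * l j t')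
          = b * (ξ * l i t' * Q t') := by
        intro t'
        have hfn : (fun j => ξ * Function.update β i b j * l j t')
            = Function.update (fun j => ξ * β j * l j t') i (ξ * b * l i t') := by
          funext j
          by_cases h : j = i
          · subst h; simp
          · simp [Function.update_of_ne h]
        rw [hfn, Finset.prod_update_of_mem (mem_univ i)]
        simp only [Finset.sdiff_singleton_eq_erase, ← hQ]
        ring
      have hsum : (∑ t' : T, (∏ j : P, ξ * Function.update β i b j * l j t')
            ^ ((1 : ℝ) / n))
          = b ^ ((1 : ℝ) / n) * S := by
        rw [hS, Finset.mul_sum]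
        refine Finset.sum_congr rfl fun t' _ => ?_
        rw [hprod t', Real.mul_rpow hb.le (mul_pos (mul_pos hξ (hl i t')) (hQpos t')).le]
      have hprod2 : (∏ j : P, Function.update β i b j * l j t) = b * R := by
        have hfn : (fun j => Function.update β i b j * l j t)
            = Function.update (fun j => β j * l j t) i (b * l i t) := by
          funext j
          by_cases h : j = i
          · subst h; simp
          · simp [Function.update_of_ne h]
        rw [hfn, Finset.prod_update_of_mem (mem_univ i)]
        simp only [Finset.sdiff_singleton_eq_erase, hR]
        ring
      unfold hstar Cstar
      rw [← hn, hsum, hprod2, Function.update_self]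
      have e1 : Real.log (b ^ ((1:ℝ)/n) * S / B)
          = (1/n) * Real.log b + Real.log S - Real.log B := by
        rw [Real.log_div (mul_pos (Real.rpow_pos_of_pos hb _) hSpos).ne' hB.ne',
          Real.log_mul (Real.rpow_pos_of_pos hb _).ne' hSpos.ne',
          Real.log_rpow hb]
      have e2 : Real.log (b * l i t / (b * R) ^ ((1:ℝ)/n))
          = Real.log b + Real.log (l i t)
            - (1/n) * (Real.log b + Real.log R) := by
        rw [Real.log_div (mul_pos hb (hl i t)).ne'
            (Real.rpow_pos_of_pos (mul_pos hb hRpos) _).ne',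
          Real.log_mul hb.ne' (hl i t).ne',
          Real.log_rpow (mul_pos hb hRpos),
          Real.log_mul hb.ne' hRpos.ne']
      rw [e1, e2]
      field_simp
      ring
    intro a ha b hb hab
    simp only
    rw [key a ha, key b hb]
    have hlog := Real.log_lt_log ha hab
    have h1 : (0:ℝ) < 1/ξ := by positivity
    nlinarith [mul_lt_mul_of_pos_left hlog h1]
  · -- strictly increasing in l i t
    set Qt : ℝ := ∏ j ∈ univ.erase i, (ξ * β j * l j t) with hQt
    have hQtpos : 0 < Qt := Finset.prod_pos fun j _ => mul_pos (mul_pos hξ (hβ j)) (hl j t)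
    set c1 : ℝ := (ξ * β i * Qt) ^ ((1 : ℝ) / n) with hc1def
    have hc1 : 0 < c1 := Real.rpow_pos_of_pos (mul_pos (mul_pos hξ (hβ i)) hQtpos) _
    set c2 : ℝ := ∑ t' ∈ univ.erase t, (∏ j : P, ξ * β j * l j t') ^ ((1 : ℝ) / n)
      with hc2def
    have hc2 : 0 ≤ c2 :=
      Finset.sum_nonneg fun t' _ =>
        (Real.rpow_pos_of_pos (Finset.prod_pos fun j _ => mul_pos (mul_pos hξ (hβ j)) (hl j t')) _).le
    set R2 : ℝ := β i * ∏ j ∈ univ.erase i, (β j * l j t) with hR2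
    have hR2pos : 0 < R2 := by
      have : (0:ℝ) < ∏ j ∈ univ.erase i, (β j * l j t) :=
        Finset.prod_pos fun j _ => mul_pos (hβ j) (hl j t)
      exact mul_pos (hβ i) this
    have key : ∀ x : ℝ, 0 < x →
        hstar ξ B β (fun j t' => if j = i ∧ t' = t then x else l j t') i t
          = (1 / ξ) * (Real.log (x ^ ((1:ℝ)/n) * c1 + c2)
              + (1 - 1/n) * Real.log x)
            + (1 / ξ) * (Real.log (β i) - Real.log B - (1/n) * Real.log R2) := by
      intro x hx
      have hprod_t : (∏ j : P, ξ * β j * (if j = i ∧ t = t then x else l j t))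
          = x * (ξ * β i * Qt) := by
        have hfn : (fun j => ξ * β j * (if j = i ∧ t = t then x else l j t))
            = Function.update (fun j => ξ * β j * l j t) i (ξ * β i * x) := by
          funext j
          by_cases h : j = i
          · subst h; simp
          · simp [h, Function.update_of_ne h]
        rw [hfn, Finset.prod_update_of_mem (mem_univ i)]
        simp only [Finset.sdiff_singleton_eq_erase, ← hQt]
        ring
      have hsum : (∑ t' : T, (∏ j : P, ξ * β j *
            (if j = i ∧ t' = t then x else l j t')) ^ ((1 : ℝ) / n))
          = x ^ ((1:ℝ)/n) * c1 + c2 := by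
        rw [← Finset.sum_erase_add _ _ (mem_univ t), hprod_t,
          Real.mul_rpow hx.le (mul_pos (mul_pos hξ (hβ i)) hQtpos).le, hc2def]
        rw [add_comm]
        congr 1
        refine Finset.sum_congr rfl fun t' ht' => ?_
        have hne : t' ≠ t := (Finset.mem_erase.mp ht').1
        congr 1
        refine Finset.prod_congr rfl fun j _ => ?_
        simp [hne]
      have hprod2 : (∏ j : P, β j * (if j = i ∧ t = t then x else l j t))
          = x * R2 := by
        have hfn : (fun j => β j * (if j = i ∧ t = t then x else l j t))
            = Function.update (fun j => β j * l j t) i (β i * x) := by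
          funext j
          by_cases h : j = i
          · subst h; simp
          · simp [h, Function.update_of_ne h]
        rw [hfn, Finset.prod_update_of_mem (mem_univ i)]
        simp only [Finset.sdiff_singleton_eq_erase, hR2]
        ring
      unfold hstar Cstar
      rw [← hn, hsum, hprod2]
      simp only [eq_self_iff_true, and_self, ite_true]
      have hargpos : 0 < x ^ ((1:ℝ)/n) * c1 + c2 :=
        add_pos_of_pos_of_nonneg (mul_pos (Real.rpow_pos_of_pos hx _) hc1) hc2
      have e1 : Real.log ((x ^ ((1:ℝ)/n) * c1 + c2) / B)
          = Real.log (x ^ ((1:ℝ)/n) * c1 + c2) - Real.log B :=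
        Real.log_div hargpos.ne' hB.ne'
      have e2 : Real.log (β i * x / (x * R2) ^ ((1:ℝ)/n))
          = Real.log (β i) + Real.log x
            - (1/n) * (Real.log x + Real.log R2) := by
        rw [Real.log_div (mul_pos (hβ i) hx).ne'
            (Real.rpow_pos_of_pos (mul_pos hx hR2pos) _).ne',
          Real.log_mul (hβ i).ne' hx.ne',
          Real.log_rpow (mul_pos hx hR2pos),
          Real.log_mul hx.ne' hR2pos.ne']
      rw [e1, e2]
      field_simp
      ring
    intro a ha b hb hab
    simp only
    rw [key a ha, key b hb]
    have h1 : Real.log (a ^ ((1:ℝ)/n) * c1 + c2)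
        < Real.log (b ^ ((1:ℝ)/n) * c1 + c2) := by
      refine Real.log_lt_log (add_pos_of_pos_of_nonneg (mul_pos (Real.rpow_pos_of_pos ha _) hc1) hc2) ?_
      have : a ^ ((1:ℝ)/n) < b ^ ((1:ℝ)/n) :=
        Real.rpow_lt_rpow ha.le hab (by positivity)
      nlinarith
    have h2 : (1 - 1/n) * Real.log a ≤ (1 - 1/n) * Real.log b := by
      refine mul_le_mul_of_nonneg_left (Real.log_lt_log ha hab).le ?_
      have : (1:ℝ)/n ≤ 1 := (div_le_one hn0).mpr hn1
      linarith
    have h3 : (0:ℝ) < 1/ξ := by positivity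
    nlinarith [mul_lt_mul_of_pos_left (add_lt_add_of_lt_of_le h1 h2) h3]
end
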